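/- Let X be a Hilbert space, Y ⊂ X a closed subspace, a : X × X → ℝ a bounded symmetric bilinear form which is coercive on Y, and let g ∈ X. Then there exists a unique u ∈ X with u − g ∈ Y and a(u, v) = 0 for all v ∈ Y. Moreover, if V ⊂ X is a closed subspace, V_0 := V ∩ Y, g_h ∈ V, and u_h ∈ V is the unique element with u_h − g_h ∈ V_0 and a(u_h, v_h) = 0 for all v_h ∈ V_0, then ‖u − u_h‖ ≤ C ( inf_{w_h ∈ V, w_h − g_h ∈ V_0} ‖u − w_h‖ ), where C depends only on the continuity and coercivity constants of a. -/
import Mathlib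

open InnerProductSpace RealInnerProductSpace

/-- Existence for the abstract problem on a closed subspace. -/
lemma exists_jump_solution
    (X : Type*) [NormedAddCommGroup X] [InnerProductSpace ℝ X] [CompleteSpace X]
    (Z : Submodule ℝ X) (hZc : IsClosed (Z : Set X))
    (a : X →ₗ[ℝ] X →ₗ[ℝ] ℝ)
    (Ca α : ℝ) (hCa : 0 < Ca) (hα : 0 < α)
    (hbdd : ∀ x y : X, |a x y| ≤ Ca * ‖x‖ * ‖y‖)
    (hcoer : ∀ y ∈ Z, α * ‖y‖ ^ 2 ≤ a y y) (g : X) :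
    ∃ u : X, u - g ∈ Z ∧ ∀ v ∈ Z, a u v = 0 := by
  haveI : CompleteSpace Z := hZc.completeSpace_coe
  -- the restricted bilinear form, as a continuous bilinear map on Z
  let b : Z →ₗ[ℝ] Z →ₗ[ℝ] ℝ :=
    LinearMap.mk₂ ℝ (fun x y : Z => a (x : X) (y : X))
      (fun x y z => by show a ((x : X) + (y : X)) (z : X) = _; rw [map_add, LinearMap.add_apply])
      (fun c x y => by show a (c • (x : X)) (y : X) = _; rw [map_smul, LinearMap.smul_apply])
      (fun x y z => by show a (x : X) ((y : X) + (z : X)) = _; rw [map_add])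
      (fun c x y => by show a (x : X) (c • (y : X)) = _; rw [map_smul])
  have hbapp : ∀ x y : Z, b x y = a (x : X) (y : X) := fun x y => rfl
  have hbound : ∀ x y : Z, ‖b x y‖ ≤ Ca * ‖x‖ * ‖y‖ := fun x y => by
    rw [hbapp]
    calc ‖a (x : X) (y : X)‖ ≤ Ca * ‖(x : X)‖ * ‖(y : X)‖ := hbdd _ _
      _ = Ca * ‖x‖ * ‖y‖ := by rw [Submodule.norm_coe, Submodule.norm_coe]
  let B : Z →L[ℝ] Z →L[ℝ] ℝ := LinearMap.mkContinuous₂ b Ca hbound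
  have hBapp : ∀ x y : Z, B x y = a (x : X) (y : X) := fun x y =>
    LinearMap.mkContinuous₂_apply b hbound x y
  have hBco : IsCoercive B := by
    refine ⟨α, hα, fun u => ?_⟩
    have h := hcoer u u.2
    rw [pow_two, ← Submodule.norm_coe] at *
    rw [hBapp]
    exact le_of_le_of_eq (le_of_eq (by rw [mul_assoc])) rfl |>.trans h
  -- right-hand side functional v ↦ -a g v on Z
  let f : Z →L[ℝ] ℝ :=
    LinearMap.mkContinuous (-(((a g).comp Z.subtype))) (Ca * ‖g‖) (fun v => by
      rw [LinearMap.neg_apply, norm_neg, LinearMap.comp_apply, Submodule.subtype_apply]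
      calc ‖a g (v : X)‖ ≤ Ca * ‖g‖ * ‖(v : X)‖ := hbdd g v
        _ = Ca * ‖g‖ * ‖v‖ := by rw [Submodule.norm_coe])
  have hfapp : ∀ v : Z, f v = -(a g (v : X)) := fun v => rfl
  set y : Z := hBco.continuousLinearEquivOfBilin.symm ((InnerProductSpace.toDual ℝ Z).symm f)
    with hy_def
  have hy : ∀ w : Z, B y w = f w := by
    intro w
    have h1 : ⟪(hBco.continuousLinearEquivOfBilin) y, w⟫_ℝ = B y w :=
      hBco.continuousLinearEquivOfBilin_apply y w
    rw [hy_def, ContinuousLinearEquiv.apply_symm_apply] at h1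
    rw [← h1, InnerProductSpace.toDual_symm_apply]
  refine ⟨g + (y : X), by simpa using y.2, fun v hv => ?_⟩
  have h2 := hy ⟨v, hv⟩
  rw [hBapp, hfapp] at h2
  rw [map_add, LinearMap.add_apply]
  simp only at h2
  linarith [h2]

/-- Abstract well-posedness and Céa-type quasi-optimality for the elliptic problem with
prescribed jump: for a bounded symmetric bilinear form `a` on a Hilbert space `X`,
coercive on a closed subspace `Y`, and any `g ∈ X`, there is a unique `u` with
`u - g ∈ Y` and `a(u, ·) = 0` on `Y`; moreover, for any closed subspace `V`, any
`g_h ∈ V`, the Galerkin solution `u_h` exists and is unique, and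
`‖u - u_h‖ ≤ C ‖u - w_h‖` for every admissible `w_h`, with `C` depending only on the
continuity and coercivity constants. -/
theorem elliptic_jump_wellposed_and_cea
    (X : Type*) [NormedAddCommGroup X] [InnerProductSpace ℝ X] [CompleteSpace X]
    (Y : Submodule ℝ X) (hYc : IsClosed (Y : Set X))
    (a : X →ₗ[ℝ] X →ₗ[ℝ] ℝ)
    (hsymm : ∀ x y : X, a x y = a y x)
    (Ca α : ℝ) (hCa : 0 < Ca) (hα : 0 < α)
    (hbdd : ∀ x y : X, |a x y| ≤ Ca * ‖x‖ * ‖y‖)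
    (hcoer : ∀ y ∈ Y, α * ‖y‖ ^ 2 ≤ a y y) :
    ∃ C > 0, ∀ g : X,
      (∃! u : X, u - g ∈ Y ∧ ∀ v ∈ Y, a u v = 0) ∧
      ∀ V : Submodule ℝ X, IsClosed (V : Set X) → ∀ g_h ∈ V,
        (∃! u_h : X, u_h ∈ V ∧ u_h - g_h ∈ V ⊓ Y ∧ ∀ v_h ∈ V ⊓ Y, a u_h v_h = 0) ∧
        ∀ u u_h : X,
          (u - g ∈ Y ∧ ∀ v ∈ Y, a u v = 0) →
          (u_h ∈ V ∧ u_h - g_h ∈ V ⊓ Y ∧ ∀ v_h ∈ V ⊓ Y, a u_h v_h = 0) →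
          ∀ w_h ∈ V, w_h - g_h ∈ V ⊓ Y → ‖u - u_h‖ ≤ C * ‖u - w_h‖ := by
  -- generic uniqueness: two solutions w.r.t. a subspace Z ≤ Y coincide
  have uniq : ∀ (Z : Submodule ℝ X), Z ≤ Y → ∀ u₁ u₂ g' : X,
      (u₁ - g' ∈ Z ∧ ∀ v ∈ Z, a u₁ v = 0) →
      (u₂ - g' ∈ Z ∧ ∀ v ∈ Z, a u₂ v = 0) → u₁ = u₂ := by
    intro Z hZY u₁ u₂ g' ⟨h1m, h1o⟩ ⟨h2m, h2o⟩
    have hd : u₁ - u₂ ∈ Z := by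
      have := Z.sub_mem h1m h2m
      simpa using this
    have hz : a (u₁ - u₂) (u₁ - u₂) = 0 := by
      have e1 := h1o _ hd
      have e2 := h2o _ hd
      simp only [map_sub, LinearMap.sub_apply] at *
      linarith
    have hc := hcoer _ (hZY hd)
    rw [hz] at hc
    have : ‖u₁ - u₂‖ ^ 2 ≤ 0 := by nlinarith
    have : ‖u₁ - u₂‖ = 0 := by nlinarith [sq_nonneg ‖u₁ - u₂‖, norm_nonneg (u₁ - u₂)]
    have := norm_eq_zero.mp this
    exact sub_eq_zero.mp this
  refine ⟨1 + Ca / α, by positivity, fun g => ?_⟩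
  constructor
  · obtain ⟨u, hu⟩ := exists_jump_solution X Y hYc a Ca α hCa hα hbdd hcoer g
    exact ⟨u, hu, fun u' hu' => uniq Y le_rfl u' u g hu' hu⟩
  · intro V hVc g_h hgh
    have hVYc : IsClosed ((V ⊓ Y : Submodule ℝ X) : Set X) := by
      have : ((V ⊓ Y : Submodule ℝ X) : Set X) = (V : Set X) ∩ (Y : Set X) := rfl
      rw [this]; exact hVc.inter hYc
    have hVYle : (V ⊓ Y : Submodule ℝ X) ≤ Y := inf_le_right
    constructor
    · obtain ⟨u_h, hm, ho⟩ := exists_jump_solution X (V ⊓ Y) hVYc a Ca α hCa hα hbdd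
        (fun y hy => hcoer y (hVYle hy)) g_h
      refine ⟨u_h, ⟨?_, hm, ho⟩, ?_⟩
      · have : u_h - g_h ∈ V := hm.1
        have := V.add_mem this hgh
        simpa using this
      · rintro u' ⟨_, hm', ho'⟩
        exact uniq (V ⊓ Y) hVYle u' u_h g_h ⟨hm', ho'⟩ ⟨hm, ho⟩
    · rintro u u_h ⟨hum, huo⟩ ⟨huhV, huhm, huho⟩ w_h hwV hwm
      -- Galerkin orthogonality: a (u - u_h) v = 0 for v ∈ V ⊓ Y
      have orth : ∀ v ∈ (V ⊓ Y : Submodule ℝ X), a (u - u_h) v = 0 := by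
        intro v hv
        have e1 := huo v (hVYle hv)
        have e2 := huho v hv
        simp only [map_sub, LinearMap.sub_apply]
        linarith
      have hd : u_h - w_h ∈ (V ⊓ Y : Submodule ℝ X) := by
        have := (V ⊓ Y : Submodule ℝ X).sub_mem huhm hwm
        simpa using this
      have key : α * ‖u_h - w_h‖ ^ 2 ≤ a (u - w_h) (u_h - w_h) := by
        have h1 : a (u - w_h) (u_h - w_h)
            = a (u - u_h) (u_h - w_h) + a (u_h - w_h) (u_h - w_h) := by
          rw [show u - w_h = (u - u_h) + (u_h - w_h) by abel, map_add, LinearMap.add_apply]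
        have h2 := orth _ hd
        have h0 := hcoer _ (hVYle hd)
        linarith
      have hub : a (u - w_h) (u_h - w_h) ≤ Ca * ‖u - w_h‖ * ‖u_h - w_h‖ :=
        le_trans (le_abs_self _) (hbdd _ _)
      have hdb : ‖u_h - w_h‖ ≤ Ca / α * ‖u - w_h‖ := by
        rcases eq_or_lt_of_le (norm_nonneg (u_h - w_h)) with h0 | h0
        · rw [← h0]; positivity
        · have h4 : α * ‖u_h - w_h‖ ^ 2 ≤ Ca * ‖u - w_h‖ * ‖u_h - w_h‖ := le_trans key hub
          rw [pow_two] at h4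
          have h3 : α * ‖u_h - w_h‖ ≤ Ca * ‖u - w_h‖ := by nlinarith
          rw [div_mul_eq_mul_div, le_div_iff₀ hα]
          linarith
      calc ‖u - u_h‖ = ‖(u - w_h) + (w_h - u_h)‖ := by rw [sub_add_sub_cancel]
        _ ≤ ‖u - w_h‖ + ‖w_h - u_h‖ := norm_add_le _ _
        _ = ‖u - w_h‖ + ‖u_h - w_h‖ := by rw [norm_sub_rev w_h u_h]
        _ ≤ ‖u - w_h‖ + Ca / α * ‖u - w_h‖ := by linarith
        _ = (1 + Ca / α) * ‖u - w_h‖ := by ring
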